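/- Let χ : A⊗B → B⊗A be a twisting map, with B finite-dimensional having basis {b_1,…,b_n} and structure constants λ^k_{ij}. Define φ_χ : B⊗_χ A → M_n(A) by sending 1⊗a to the matrix with (j,i)-entry γ_i^j(a), and b_k⊗1 to the matrix with (i,j)-entry λ^i_{kj}·1_A. Then φ_χ extends to a well-defined injective K-algebra homomorphism from B⊗_χ A to M_n(A), i.e., a faithful matrix representation of the twisted tensor product. -/

import Mathlib

open TensorProduct LinearMap

set_option synthInstance.maxHeartbeats 1000000
set_option maxHeartbeats 1000000

variable (K : Type*)

def IsTwistingMap {A B : Type*} [Field K] [Ring A] [Ring B] [Algebra K A] [Algebra K B]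
    (χ : A ⊗[K] B →ₗ[K] B ⊗[K] A) : Prop :=
  (∀ b : B, χ ((1 : A) ⊗ₜ[K] b) = b ⊗ₜ[K] (1 : A)) ∧
  (∀ a : A, χ (a ⊗ₜ[K] (1 : B)) = (1 : B) ⊗ₜ[K] a) ∧
  (∀ (a a' : A) (b : B),
    χ ((a * a') ⊗ₜ[K] b) =
      lTensor B (mul' K A)
        (TensorProduct.assoc K B A A
          (rTensor A χ
            ((TensorProduct.assoc K A B A).symm (a ⊗ₜ[K] χ (a' ⊗ₜ[K] b)))))) ∧
  (∀ (a : A) (b b' : B),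
    χ (a ⊗ₜ[K] (b * b')) =
      rTensor A (mul' K B)
        ((TensorProduct.assoc K B B A).symm
          (lTensor B χ
            (TensorProduct.assoc K B A B (χ (a ⊗ₜ[K] b) ⊗ₜ[K] b')))))

noncomputable def twistMul {A B : Type*} [Field K] [Ring A] [Ring B] [Algebra K A] [Algebra K B]
    (χ : A ⊗[K] B →ₗ[K] B ⊗[K] A) :
    (B ⊗[K] A) ⊗[K] (B ⊗[K] A) →ₗ[K] B ⊗[K] A :=
  TensorProduct.map (mul' K B) (mul' K A)
    ∘ₗ (TensorProduct.assoc K B B (A ⊗[K] A)).symm.toLinearMap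
    ∘ₗ lTensor B (TensorProduct.assoc K B A A).toLinearMap
    ∘ₗ lTensor B (rTensor A χ)
    ∘ₗ lTensor B (TensorProduct.assoc K A B A).symm.toLinearMap
    ∘ₗ (TensorProduct.assoc K B A (B ⊗[K] A)).toLinearMap

namespace TwistAux

variable {K A B : Type*} [Field K] [Ring A] [Ring B] [Algebra K A] [Algebra K B]

lemma map_map (f f' : B →ₗ[K] B) (g g' : A →ₗ[K] A) (r : B ⊗[K] A) :
    TensorProduct.map f g (TensorProduct.map f' g' r) =
      TensorProduct.map (f ∘ₗ f') (g ∘ₗ g') r := by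
  rw [TensorProduct.map_comp]; rfl

lemma twistMul_tmul (χ : A ⊗[K] B →ₗ[K] B ⊗[K] A) (c : B) (a : A) (d : B) (a' : A) :
    twistMul K χ ((c ⊗ₜ[K] a) ⊗ₜ[K] (d ⊗ₜ[K] a')) =
      TensorProduct.map (mulLeft K c) (mulRight K a') (χ (a ⊗ₜ[K] d)) := by
  simp only [twistMul, coe_comp, Function.comp_apply, LinearEquiv.coe_coe, assoc_tmul,
    lTensor_tmul, assoc_symm_tmul, rTensor_tmul]
  generalize χ (a ⊗ₜ[K] d) = t
  induction t using TensorProduct.induction_on with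
  | zero => simp only [zero_tmul, tmul_zero, map_zero, LinearEquiv.map_zero]
  | tmul p q => simp [mul'_apply]
  | add t1 t2 h1 h2 =>
      simp only [tmul_add, add_tmul, map_add, LinearEquiv.map_add, h1, h2]


lemma T0 (z : A) (r : B ⊗[K] A) :
    lTensor B (mul' K A) ((TensorProduct.assoc K B A A) (r ⊗ₜ[K] z)) =
      TensorProduct.map LinearMap.id (mulRight K z) r := by
  induction r using TensorProduct.induction_on with
  | zero => simp
  | tmul p q => simp [mul'_apply]
  | add t1 t2 h1 h2 => simp only [add_tmul, map_add, LinearEquiv.map_add, h1, h2]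

lemma T0' (u : B) (r : B ⊗[K] A) :
    rTensor A (mul' K B) ((TensorProduct.assoc K B B A).symm (u ⊗ₜ[K] r)) =
      TensorProduct.map (mulLeft K u) LinearMap.id r := by
  induction r using TensorProduct.induction_on with
  | zero => simp
  | tmul p q => simp [mul'_apply]
  | add t1 t2 h1 h2 => simp only [tmul_add, map_add, LinearEquiv.map_add, h1, h2]

lemma S1a (χ : A ⊗[K] B →ₗ[K] B ⊗[K] A) (u : B) (v : A) (s : B ⊗[K] A) :
    twistMul K χ ((u ⊗ₜ[K] v) ⊗ₜ[K] s) =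
      TensorProduct.map (mulLeft K u) LinearMap.id
        (lTensor B (mul' K A) ((TensorProduct.assoc K B A A)
          (rTensor A χ ((TensorProduct.assoc K A B A).symm (v ⊗ₜ[K] s))))) := by
  induction s using TensorProduct.induction_on with
  | zero => simp
  | tmul w z =>
      rw [twistMul_tmul, assoc_symm_tmul, rTensor_tmul, T0, map_map]
      simp
  | add t1 t2 h1 h2 => simp only [tmul_add, map_add, LinearEquiv.map_add, h1, h2]

lemma S2a (χ : A ⊗[K] B →ₗ[K] B ⊗[K] A) (w : B) (z : A) (t : B ⊗[K] A) :
    twistMul K χ (t ⊗ₜ[K] (w ⊗ₜ[K] z)) =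
      TensorProduct.map LinearMap.id (mulRight K z)
        (rTensor A (mul' K B) ((TensorProduct.assoc K B B A).symm
          (lTensor B χ ((TensorProduct.assoc K B A B) (t ⊗ₜ[K] w))))) := by
  induction t using TensorProduct.induction_on with
  | zero => simp
  | tmul u v =>
      rw [twistMul_tmul, assoc_tmul, lTensor_tmul, T0', map_map]
      simp
  | add t1 t2 h1 h2 => simp only [add_tmul, map_add, LinearEquiv.map_add, h1, h2]


lemma S1 (χ : A ⊗[K] B →ₗ[K] B ⊗[K] A)
    (h3 : ∀ (a a' : A) (bb : B),
      χ ((a * a') ⊗ₜ[K] bb) =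
        lTensor B (mul' K A)
          (TensorProduct.assoc K B A A
            (rTensor A χ
              ((TensorProduct.assoc K A B A).symm (a ⊗ₜ[K] χ (a' ⊗ₜ[K] bb))))))
    (c : B) (a' : A) (d : B) (t : B ⊗[K] A) :
    twistMul K χ ((TensorProduct.map (mulLeft K c) (mulRight K a') t) ⊗ₜ[K] (d ⊗ₜ[K] (1 : A))) =
      TensorProduct.map (mulLeft K c) LinearMap.id
        (twistMul K χ (t ⊗ₜ[K] χ (a' ⊗ₜ[K] d))) := by
  induction t using TensorProduct.induction_on with
  | zero => simp
  | tmul u v =>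
      rw [map_tmul, twistMul_tmul]
      simp only [mulLeft_apply, mulRight_apply]
      rw [h3 v a' d, S1a, map_map, mulLeft_mul, mulRight_one]
      simp
  | add t1 t2 h1 h2 => simp only [map_add, add_tmul, h1, h2]

lemma S2 (χ : A ⊗[K] B →ₗ[K] B ⊗[K] A)
    (h4 : ∀ (a : A) (bb bb' : B),
      χ (a ⊗ₜ[K] (bb * bb')) =
        rTensor A (mul' K B)
          ((TensorProduct.assoc K B B A).symm
            (lTensor B χ
              (TensorProduct.assoc K B A B (χ (a ⊗ₜ[K] bb) ⊗ₜ[K] bb')))))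
    (c : B) (a : A) (c' : B) (s : B ⊗[K] A) :
    twistMul K χ ((c ⊗ₜ[K] a) ⊗ₜ[K] TensorProduct.map (mulLeft K c') LinearMap.id s) =
      TensorProduct.map (mulLeft K c) LinearMap.id
        (twistMul K χ (χ (a ⊗ₜ[K] c') ⊗ₜ[K] s)) := by
  induction s using TensorProduct.induction_on with
  | zero => simp
  | tmul w z =>
      rw [map_tmul, twistMul_tmul]
      simp only [mulLeft_apply, id_coe, id_eq]
      rw [h4 a c' w, S2a, map_map]
      simp
  | add t1 t2 h1 h2 => simp only [map_add, tmul_add, h1, h2]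

lemma twistMul_assoc (χ : A ⊗[K] B →ₗ[K] B ⊗[K] A)
    (h3 : ∀ (a a' : A) (bb : B),
      χ ((a * a') ⊗ₜ[K] bb) =
        lTensor B (mul' K A)
          (TensorProduct.assoc K B A A
            (rTensor A χ
              ((TensorProduct.assoc K A B A).symm (a ⊗ₜ[K] χ (a' ⊗ₜ[K] bb))))))
    (h4 : ∀ (a : A) (bb bb' : B),
      χ (a ⊗ₜ[K] (bb * bb')) =
        rTensor A (mul' K B)
          ((TensorProduct.assoc K B B A).symm
            (lTensor B χ
              (TensorProduct.assoc K B A B (χ (a ⊗ₜ[K] bb) ⊗ₜ[K] bb')))))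
    (x y : B ⊗[K] A) (d : B) :
    twistMul K χ (twistMul K χ (x ⊗ₜ[K] y) ⊗ₜ[K] (d ⊗ₜ[K] (1 : A))) =
      twistMul K χ (x ⊗ₜ[K] twistMul K χ (y ⊗ₜ[K] (d ⊗ₜ[K] (1 : A)))) := by
  induction x using TensorProduct.induction_on with
  | zero => simp
  | add x1 x2 hx1 hx2 => simp only [add_tmul, map_add, hx1, hx2]
  | tmul c a =>
      induction y using TensorProduct.induction_on with
      | zero => simp
      | add y1 y2 hy1 hy2 => simp only [add_tmul, tmul_add, map_add, hy1, hy2]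
      | tmul c' a' =>
          rw [twistMul_tmul χ c a c' a', S1 χ h3, twistMul_tmul χ c' a' d 1,
            mulRight_one, S2 χ h4]


lemma twistMul_right_smul (χ : A ⊗[K] B →ₗ[K] B ⊗[K] A) (x : B ⊗[K] A) (d : B) (m : A) :
    twistMul K χ (x ⊗ₜ[K] (d ⊗ₜ[K] m)) =
      TensorProduct.map LinearMap.id (mulRight K m)
        (twistMul K χ (x ⊗ₜ[K] (d ⊗ₜ[K] (1 : A)))) := by
  induction x using TensorProduct.induction_on with
  | zero => simp
  | tmul c a =>
      rw [twistMul_tmul, twistMul_tmul, map_map, mulRight_one]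
      simp [mul_one]
  | add t1 t2 h1 h2 => simp only [add_tmul, map_add, h1, h2]

lemma twistMul_one_left (χ : A ⊗[K] B →ₗ[K] B ⊗[K] A)
    (h1 : ∀ bb : B, χ ((1 : A) ⊗ₜ[K] bb) = bb ⊗ₜ[K] (1 : A)) (w : B ⊗[K] A) :
    twistMul K χ (((1 : B) ⊗ₜ[K] (1 : A)) ⊗ₜ[K] w) = w := by
  induction w using TensorProduct.induction_on with
  | zero => simp
  | tmul d a => rw [twistMul_tmul, h1]; simp
  | add t1 t2 hh1 hh2 => simp only [tmul_add, map_add, hh1, hh2]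

lemma twistMul_one_right (χ : A ⊗[K] B →ₗ[K] B ⊗[K] A)
    (h2 : ∀ a : A, χ (a ⊗ₜ[K] (1 : B)) = (1 : B) ⊗ₜ[K] a) (x : B ⊗[K] A) :
    twistMul K χ (x ⊗ₜ[K] ((1 : B) ⊗ₜ[K] (1 : A))) = x := by
  induction x using TensorProduct.induction_on with
  | zero => simp
  | tmul c a => rw [twistMul_tmul, h2]; simp
  | add t1 t2 hh1 hh2 => simp only [add_tmul, map_add, hh1, hh2]

variable {n : ℕ}

noncomputable def coordE (bb : Module.Basis (Fin n) K B) (i : Fin n) : B ⊗[K] A →ₗ[K] A :=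
  (TensorProduct.lid K A).toLinearMap ∘ₗ rTensor A (bb.coord i)

@[simp] lemma coordE_tmul (bb : Module.Basis (Fin n) K B) (i : Fin n) (d : B) (m : A) :
    coordE (A := A) bb i (d ⊗ₜ[K] m) = bb.repr d i • m := by
  simp [coordE, Module.Basis.coord_apply]

lemma coordE_expand (bb : Module.Basis (Fin n) K B) (t : B ⊗[K] A) :
    ∑ k : Fin n, bb k ⊗ₜ[K] coordE (A := A) bb k t = t := by
  induction t using TensorProduct.induction_on with
  | zero => simp
  | tmul d m =>
      simp_rw [coordE_tmul, tmul_smul, smul_tmul']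
      rw [← sum_tmul, Module.Basis.sum_repr]
  | add t1 t2 h1 h2 =>
      simp only [map_add, tmul_add]
      rw [Finset.sum_add_distrib, h1, h2]

lemma coordE_mulRight (bb : Module.Basis (Fin n) K B) (i : Fin n) (m : A) (t : B ⊗[K] A) :
    coordE (A := A) bb i (TensorProduct.map LinearMap.id (mulRight K m) t) =
      coordE (A := A) bb i t * m := by
  induction t using TensorProduct.induction_on with
  | zero => simp
  | tmul d a => simp [smul_mul_assoc]
  | add t1 t2 h1 h2 => simp only [map_add, h1, h2, add_mul]

end TwistAux

theorem faithful_matrix_representation {A B : Type*} [Field K] [Ring A] [Ring B]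
    [Algebra K A] [Algebra K B] {n : ℕ}
    (b : Module.Basis (Fin n) K B) (lam : Fin n → Fin n → Fin n → K)
    (hlam : ∀ i j : Fin n, b i * b j = ∑ k : Fin n, lam i j k • b k)
    (χ : A ⊗[K] B →ₗ[K] B ⊗[K] A) (γ : Fin n → Fin n → (A →ₗ[K] A))
    (hχ : ∀ (a : A) (i : Fin n), χ (a ⊗ₜ[K] b i) = ∑ j : Fin n, b j ⊗ₜ[K] γ i j a)
    (htw : IsTwistingMap K χ) :
    ∃ Φ : B ⊗[K] A →ₗ[K] Matrix (Fin n) (Fin n) A,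
      (∀ a : A, Φ ((1 : B) ⊗ₜ[K] a) = Matrix.of fun j i : Fin n => γ i j a) ∧
      (∀ k : Fin n,
        Φ (b k ⊗ₜ[K] (1 : A)) = Matrix.of fun i j : Fin n => algebraMap K A (lam k j i)) ∧
      (∀ x y : B ⊗[K] A, Φ (twistMul K χ (x ⊗ₜ[K] y)) = Φ x * Φ y) ∧
      Φ ((1 : B) ⊗ₜ[K] (1 : A)) = 1 ∧
      Function.Injective Φ := by
  classical
  obtain ⟨h1, h2, h3, h4⟩ := htw
  let Φ : B ⊗[K] A →ₗ[K] Matrix (Fin n) (Fin n) A :=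
    { toFun := fun x => Matrix.of fun i j =>
        TwistAux.coordE b i (twistMul K χ (x ⊗ₜ[K] (b j ⊗ₜ[K] (1 : A))))
      map_add' := by
        intro x y
        ext i j
        simp [add_tmul]
      map_smul' := by
        intro c x
        ext i j
        simp [← smul_tmul'] }
  have hΦ : ∀ (x : B ⊗[K] A) (i j : Fin n),
      Φ x i j = TwistAux.coordE b i (twistMul K χ (x ⊗ₜ[K] (b j ⊗ₜ[K] (1 : A)))) :=
    fun _ _ _ => rfl
  refine ⟨Φ, ?_, ?_, ?_, ?_, ?_⟩
  · -- Φ (1 ⊗ a)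
    intro a
    ext j i
    rw [hΦ, TwistAux.twistMul_tmul, mulLeft_one, mulRight_one, TensorProduct.map_id,
      LinearMap.id_apply, hχ a i, map_sum]
    simp [Finsupp.single_apply]
  · -- Φ (b k ⊗ 1)
    intro k
    ext i j
    rw [hΦ, TwistAux.twistMul_tmul, h1 (b j), map_tmul]
    simp only [mulLeft_apply, mulRight_apply, mul_one]
    rw [hlam k j, sum_tmul, map_sum]
    simp [← smul_tmul', Finsupp.single_apply, Algebra.algebraMap_eq_smul_one]
  · -- multiplicative
    intro x y
    ext i j
    rw [hΦ, TwistAux.twistMul_assoc χ h3 h4,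
      ← TwistAux.coordE_expand b (twistMul K χ (y ⊗ₜ[K] (b j ⊗ₜ[K] (1 : A)))),
      tmul_sum, map_sum, map_sum]
    rw [Matrix.mul_apply]
    refine Finset.sum_congr rfl fun k _ => ?_
    rw [TwistAux.twistMul_right_smul, TwistAux.coordE_mulRight]
    rfl
  · -- unit
    ext i j
    rw [hΦ, TwistAux.twistMul_one_left χ h1]
    simp [Matrix.one_apply, Finsupp.single_apply, eq_comm]
  · -- injective
    intro x y hxy
    have h0 : Φ (x - y) = 0 := by rw [map_sub, hxy, sub_self]
    have hcol : ∀ j, twistMul K χ ((x - y) ⊗ₜ[K] (b j ⊗ₜ[K] (1 : A))) = 0 := by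
      intro j
      rw [← TwistAux.coordE_expand b (twistMul K χ ((x - y) ⊗ₜ[K] (b j ⊗ₜ[K] (1 : A))))]
      have hi : ∀ i, TwistAux.coordE (A := A) b i
          (twistMul K χ ((x - y) ⊗ₜ[K] (b j ⊗ₜ[K] (1 : A)))) = 0 := by
        intro i
        rw [← hΦ, h0]
        rfl
      simp [hi]
    have hone : ((1 : B) ⊗ₜ[K] (1 : A)) = ∑ j, b.repr 1 j • (b j ⊗ₜ[K] (1 : A)) := by
      conv_lhs => rw [← b.sum_repr 1]
      rw [sum_tmul]
      exact Finset.sum_congr rfl fun x _ => (smul_tmul' _ _ _).symm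
    have hsub : x - y = 0 := by
      rw [← TwistAux.twistMul_one_right χ h2 (x - y), hone, tmul_sum]
      have : ∀ j : Fin n, twistMul K χ ((x - y) ⊗ₜ[K] (b.repr 1 j • (b j ⊗ₜ[K] (1:A)))) = 0 := by
        intro j
        rw [tmul_smul, map_smul, hcol, smul_zero]
      rw [map_sum]
      exact Finset.sum_eq_zero fun j _ => this j
    exact sub_eq_zero.mp hsub
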